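/- Let l be an odd prime and set D = (−1)^((l−1)/2) · l. Then there exist polynomials P, Q with integer coefficients such that 4 · Φ_l = P² − D · Q² in ℤ[X], where Φ_l is the l-th cyclotomic polynomial. -/

import Mathlib

set_option maxHeartbeats 2000000 in
open Polynomial Finset AddChar IsCyclotomicExtension in
theorem four_mul_cyclotomic_eq_sq_sub_sq
    (l : ℕ) (hl : l.Prime) (hlodd : Odd l)
    (D : ℤ) (hD : D = (-1) ^ ((l - 1) / 2) * l) :
    ∃ P Q : Polynomial ℤ,
      4 * Polynomial.cyclotomic l ℤ = P ^ 2 - Polynomial.C D * Q ^ 2 := by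
  classical
  haveI : Fact l.Prime := ⟨hl⟩
  haveI : NeZero l := ⟨hl.ne_zero⟩
  have hl2 : l ≠ 2 := by rintro rfl; rw [Nat.odd_iff] at hlodd; omega
  set n : ℕ+ := ⟨l, hl.pos⟩ with hn
  set K := CyclotomicField (n : ℕ) ℚ with hK
  haveI : NeZero ((n : ℕ) : ℚ) := ⟨by exact_mod_cast hl.ne_zero⟩
  haveI : IsCyclotomicExtension {(n : ℕ)} ℚ K := CyclotomicField.isCyclotomicExtension (n := (n : ℕ)) (K := ℚ)
  set ζ : K := zeta (n : ℕ) ℚ K with hzeta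
  have hζ : IsPrimitiveRoot ζ l := zeta_spec (n : ℕ) ℚ K
  have hζ1 : ζ ^ l = 1 := hζ.pow_eq_one
  haveI : IsGalois ℚ K := isGalois {(n : ℕ)} ℚ K
  haveI : FiniteDimensional ℚ K := finiteDimensional {(n : ℕ)} ℚ K
  -- the subalgebra of integral elements
  set A : Subalgebra ℤ K := integralClosure ℤ K with hA
  have hζA : ζ ∈ A := by
    refine ⟨X ^ l - C 1, monic_X_pow_sub_C 1 hl.ne_zero, ?_⟩
    simp [hζ1]
  -- roots indexed by ZMod l
  set e : ZMod l → K := fun x => ζ ^ x.val with he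
  have heA : ∀ x : ZMod l, e x ∈ A := fun x => A.pow_mem hζA _
  have e_mul : ∀ x y : ZMod l, e (x * y) = ζ ^ (x.val * y.val) := by
    intro x y
    show ζ ^ (x * y).val = _
    rw [ZMod.val_mul, ← pow_eq_pow_mod _ hζ1]
  have e_inj : Function.Injective e := fun x y hxy =>
    ZMod.val_injective l (hζ.pow_inj (ZMod.val_lt x) (ZMod.val_lt y) hxy)
  have eu_inj : Function.Injective (fun a : (ZMod l)ˣ => e ↑a) :=
    fun a b hab => Units.ext (e_inj hab)
  have e_prim : ∀ a : (ZMod l)ˣ, IsPrimitiveRoot (e ↑a) l := fun a =>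
    hζ.pow_of_coprime _ (ZMod.val_coe_unit_coprime a)
  have himg : Finset.image (fun a : (ZMod l)ˣ => e ↑a) univ = primitiveRoots l K := by
    apply Finset.eq_of_subset_of_card_le
    · intro x hx
      simp only [Finset.mem_image] at hx
      obtain ⟨a, -, rfl⟩ := hx
      exact (mem_primitiveRoots hl.pos).mpr (e_prim a)
    · rw [hζ.card_primitiveRoots, Finset.card_image_of_injective _ eu_inj, Finset.card_univ,
        ZMod.card_units_eq_totient]
  have hcyc : (∏ a : (ZMod l)ˣ, (X - C (e ↑a))) = cyclotomic l K := by
    rw [cyclotomic_eq_prod_X_sub_primitiveRoots hζ, ← himg,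
      Finset.prod_image (fun a _ b _ h => eu_inj h)]
  -- characters and Gauss sum
  set χ₀ := quadraticChar (ZMod l) with hχ₀
  set χ : MulChar (ZMod l) K := χ₀.ringHomComp (Int.castRingHom K) with hχ
  set ψ : AddChar (ZMod l) K := zmodChar l hζ1 with hψdef
  set τ : K := gaussSum χ ψ with hτdef
  have hψe : ∀ x : ZMod l, ψ x = e x := fun x => rfl
  have hringchar : ringChar (ZMod l) ≠ 2 := by
    rw [ZMod.ringChar_zmod_n]; exact hl2
  have hχ₁ : χ ≠ 1 := by
    obtain ⟨a, ha⟩ := quadraticChar_exists_neg_one' hringchar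
    refine MulChar.ne_one_iff.mpr ⟨a, ?_⟩
    rw [hχ, MulChar.ringHomComp_apply, ha]
    intro h
    norm_num at h
  have hχ₂ : χ.IsQuadratic := (quadraticChar_isQuadratic (ZMod l)).comp _
  have hψprim : ψ.IsPrimitive := zmodChar_primitive_of_primitive_root l hζ
  have hτsq : τ ^ 2 = algebraMap ℤ K D := by
    rw [hτdef, gaussSum_sq hχ₁ hχ₂ hψprim]
    have h0 : χ (-1) = ((χ₀ (-1) : ℤ) : K) := rfl
    rw [h0, quadraticChar_neg_one hringchar, ZMod.card,
      ZMod.χ₄_eq_neg_one_pow (Nat.odd_iff.mp hlodd), hD]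
    have h2 : l / 2 = (l - 1) / 2 := by have := Nat.odd_iff.mp hlodd; omega
    push_cast [h2]
    ring
  have hτA : τ ∈ A := by
    rw [hτdef, gaussSum]
    refine A.sum_mem fun x _ => A.mul_mem ?_ (hψe x ▸ heA x)
    have : χ x = algebraMap ℤ K (χ₀ x) := rfl
    rw [this]
    exact A.algebraMap_mem _
  -- Galois action
  have hact : ∀ (σ : K ≃ₐ[ℚ] K) (x : ZMod l),
      σ (e x) = e ((hζ.autToPow ℚ σ : ZMod l) * x) := by
    intro σ x
    have hspec : ζ ^ ((hζ.autToPow ℚ σ : ZMod l)).val = σ ζ := hζ.autToPow_spec ℚ σ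
    rw [e_mul, he]
    simp only
    rw [pow_mul, hspec, ← map_pow]
  have hτact : ∀ (σ : K ≃ₐ[ℚ] K),
      σ τ = ((χ₀ ((hζ.autToPow ℚ σ : ZMod l)) : ℤ) : K) * τ := by
    intro σ
    set t := hζ.autToPow ℚ σ with ht
    have h1 : σ τ = gaussSum χ (mulShift ψ ↑t) := by
      rw [hτdef, gaussSum, map_sum]
      refine Finset.sum_congr rfl fun x _ => ?_
      rw [map_mul, mulShift_apply, hψe, hψe, hact σ x]
      congr 1
      have h3 : χ x = ((χ₀ x : ℤ) : K) := rfl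
      rw [h3, map_intCast]
    have h2 : χ ↑t * gaussSum χ (mulShift ψ ↑t) = τ := gaussSum_mulShift χ ψ t
    have hdich : χ₀ ↑t = 1 ∨ χ₀ ↑t = -1 := quadraticChar_dichotomy (Units.ne_zero t)
    have hχt : χ ↑t = ((χ₀ ↑t : ℤ) : K) := rfl
    rcases hdich with h | h <;>
      rw [h1, ← h2, hχt, h] <;> push_cast <;> ring
  -- the two half-products, over A
  set F : A[X] := ∏ a ∈ univ.filter (fun a : (ZMod l)ˣ => χ₀ ↑a = 1),
      (X - C (⟨e ↑a, heA ↑a⟩ : A)) with hF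
  set G : A[X] := ∏ a ∈ univ.filter (fun a : (ZMod l)ˣ => χ₀ ↑a = -1),
      (X - C (⟨e ↑a, heA ↑a⟩ : A)) with hG
  set ι : A →+* K := (algebraMap A K : A →+* K) with hι
  set f : K[X] := F.map ι with hf
  set g : K[X] := G.map ι with hg
  have hfeq : f = ∏ a ∈ univ.filter (fun a : (ZMod l)ˣ => χ₀ ↑a = 1), (X - C (e ↑a)) := by
    rw [hf, hF, Polynomial.map_prod]
    exact Finset.prod_congr rfl fun a _ => by rw [Polynomial.map_sub, map_X, map_C]; rfl
  have hgeq : g = ∏ a ∈ univ.filter (fun a : (ZMod l)ˣ => χ₀ ↑a = -1), (X - C (e ↑a)) := by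
    rw [hg, hG, Polynomial.map_prod]
    exact Finset.prod_congr rfl fun a _ => by rw [Polynomial.map_sub, map_X, map_C]; rfl
  have hfilter : univ.filter (fun a : (ZMod l)ˣ => ¬ χ₀ ↑a = 1)
      = univ.filter (fun a : (ZMod l)ˣ => χ₀ ↑a = -1) := by
    ext a
    simp only [Finset.mem_filter, Finset.mem_univ, true_and]
    have hd := quadraticChar_dichotomy (F := ZMod l) (Units.ne_zero a)
    constructor
    · intro h; tauto
    · intro h h1; rw [h1] at h; norm_num at h
  have hfg : f * g = cyclotomic l K := by
    rw [hfeq, hgeq, ← hcyc, ← hfilter,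
      Finset.prod_filter_mul_prod_filter_not univ (fun a : (ZMod l)ˣ => χ₀ ↑a = 1)]
  -- reindexing products under multiplication by a unit
  have hreindex : ∀ (u : (ZMod l)ˣ) (c : ℤ),
      (∏ a ∈ univ.filter (fun a : (ZMod l)ˣ => χ₀ ↑a = c), (X - C (e ↑(u * a))))
        = ∏ b ∈ univ.filter (fun b : (ZMod l)ˣ => χ₀ ↑b = χ₀ ↑u * c), (X - C (e ↑b)) := by
    intro u c
    refine Finset.prod_nbij' (fun a => u * a) (fun b => u⁻¹ * b) ?_ ?_ ?_ ?_ ?_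
    · intro a ha
      simp only [Finset.mem_filter, Finset.mem_univ, true_and] at ha ⊢
      rw [Units.val_mul, map_mul, ha]
    · intro b hb
      simp only [Finset.mem_filter, Finset.mem_univ, true_and] at hb ⊢
      have : (χ₀ ↑u) * (χ₀ ↑(u⁻¹ * b)) = χ₀ ↑u * c := by
        rw [← hb, Units.val_mul, map_mul, ← mul_assoc, ← map_mul, ← Units.val_mul,
          mul_inv_cancel, Units.val_one, map_one, one_mul]
      have hu : χ₀ ↑u ≠ 0 := by
        rcases quadraticChar_dichotomy (F := ZMod l) (Units.ne_zero u) with h | h <;>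
          rw [h] <;> norm_num
      exact mul_left_cancel₀ hu this
    · intro a _; show u⁻¹ * (u * a) = a; rw [inv_mul_cancel_left]
    · intro b _; show u * (u⁻¹ * b) = b; rw [mul_inv_cancel_left]
    · intro a _; rfl
  -- action of σ on f and g
  have hmapf : ∀ (σ : K ≃ₐ[ℚ] K), f.map (σ : K →+* K) =
      ∏ b ∈ univ.filter
        (fun b : (ZMod l)ˣ => χ₀ ↑b = χ₀ ↑(hζ.autToPow ℚ σ) * 1), (X - C (e ↑b)) := by
    intro σ
    rw [hfeq, Polynomial.map_prod, ← hreindex]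
    refine Finset.prod_congr rfl fun a _ => ?_
    have h5 : σ (e ↑a) = e ↑((hζ.autToPow ℚ σ) * a) := by
      rw [hact σ ↑a]
      exact congrArg e (Units.val_mul _ _).symm
    rw [Polynomial.map_sub, map_X, map_C]
    exact congrArg (fun z => X - C z) h5
  have hmapg : ∀ (σ : K ≃ₐ[ℚ] K), g.map (σ : K →+* K) =
      ∏ b ∈ univ.filter
        (fun b : (ZMod l)ˣ => χ₀ ↑b = χ₀ ↑(hζ.autToPow ℚ σ) * (-1)), (X - C (e ↑b)) := by
    intro σ
    rw [hgeq, Polynomial.map_prod, ← hreindex]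
    refine Finset.prod_congr rfl fun a _ => ?_
    have h5 : σ (e ↑a) = e ↑((hζ.autToPow ℚ σ) * a) := by
      rw [hact σ ↑a]
      exact congrArg e (Units.val_mul _ _).symm
    rw [Polynomial.map_sub, map_X, map_C]
    exact congrArg (fun z => X - C z) h5
  -- the two candidate polynomials over A
  set P₀ : K[X] := (F + G).map ι with hP₀
  set Q₀ : K[X] := ((F - G) * C (⟨τ, hτA⟩ : A)).map ι with hQ₀
  have hP₀eq : P₀ = f + g := by rw [hP₀, Polynomial.map_add, hf, hg]
  have hQ₀eq : Q₀ = (f - g) * C τ := by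
    rw [hQ₀, Polynomial.map_mul, Polynomial.map_sub, map_C, hf, hg]; rfl
  -- invariance of coefficients
  have hinv : ∀ (σ : K ≃ₐ[ℚ] K), P₀.map (σ : K →+* K) = P₀ ∧ Q₀.map (σ : K →+* K) = Q₀ := by
    intro σ
    set t := hζ.autToPow ℚ σ with ht
    have hτσ := hτact σ
    rcases quadraticChar_dichotomy (F := ZMod l) (Units.ne_zero t) with h | h
    · have hfσ : f.map (σ : K →+* K) = f := by
        rw [hmapf σ, hfeq, ← ht, h]; norm_num
      have hgσ : g.map (σ : K →+* K) = g := by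
        rw [hmapg σ, hgeq, ← ht, h]; norm_num
      have hτσ' : σ τ = τ := by rw [hτσ, ← ht, h]; norm_num
      constructor
      · rw [hP₀eq, Polynomial.map_add, hfσ, hgσ]
      · rw [hQ₀eq, Polynomial.map_mul, Polynomial.map_sub, map_C, hfσ, hgσ]
        show (f - g) * C (σ τ) = _
        rw [hτσ']
    · have hfσ : f.map (σ : K →+* K) = g := by
        rw [hmapf σ, hgeq, ← ht, h]; norm_num
      have hgσ : g.map (σ : K →+* K) = f := by
        rw [hmapg σ, hfeq, ← ht, h]; norm_num
      have hτσ' : σ τ = -τ := by rw [hτσ, ← ht, h]; push_cast; ring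
      constructor
      · rw [hP₀eq, Polynomial.map_add, hfσ, hgσ, add_comm]
      · rw [hQ₀eq, Polynomial.map_mul, Polynomial.map_sub, map_C, hfσ, hgσ]
        show (g - f) * C (σ τ) = _
        rw [hτσ']
        rw [map_neg]
        ring
  -- invariant + integral coefficients descend to ℤ
  have hdescend : ∀ c : K, (∀ σ : K ≃ₐ[ℚ] K, σ c = c) → IsIntegral ℤ c →
      c ∈ Set.range (Int.castRingHom K) := by
    intro c hc hint
    have hfix : IntermediateField.fixedField (⊤ : Subgroup (K ≃ₐ[ℚ] K)) = ⊥ :=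
      ((IsGalois.tfae (F := ℚ) (E := K)).out 0 1).mp (by infer_instance)
    have hmem : c ∈ IntermediateField.fixedField (⊤ : Subgroup (K ≃ₐ[ℚ] K)) := fun gg => hc gg
    rw [hfix, IntermediateField.mem_bot] at hmem
    obtain ⟨q, rfl⟩ := hmem
    rw [isIntegral_algebraMap_iff (algebraMap ℚ K).injective] at hint
    obtain ⟨z, hz⟩ := IsIntegrallyClosed.isIntegral_iff.mp hint
    refine ⟨z, ?_⟩
    rw [← hz]
    simp [← IsScalarTower.algebraMap_apply ℤ ℚ K]
  have hlift : ∀ R₀ : A[X], (∀ σ : K ≃ₐ[ℚ] K, (R₀.map ι).map (σ : K →+* K) = R₀.map ι) →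
      ∃ R : ℤ[X], R.map (Int.castRingHom K) = R₀.map ι := by
    intro R₀ hinv'
    rw [← Polynomial.mem_lifts, Polynomial.lifts_iff_coeff_lifts]
    intro m
    apply hdescend
    · intro σ
      have := congrArg (fun p => Polynomial.coeff p m) (hinv' σ)
      simpa [Polynomial.coeff_map] using this
    · rw [Polynomial.coeff_map]
      exact ((R₀.coeff m) : A).2
  obtain ⟨P, hP⟩ := hlift (F + G) fun σ => by rw [← hP₀]; exact (hinv σ).1
  obtain ⟨Q₁, hQ₁⟩ := hlift ((F - G) * C (⟨τ, hτA⟩ : A)) fun σ => by rw [← hQ₀]; exact (hinv σ).2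
  rw [← hP₀] at hP
  rw [← hQ₀] at hQ₁
  -- the key identity over K
  have hDτ : (Int.castRingHom K) D = τ ^ 2 := by rw [hτsq]; rfl
  have h1 : Polynomial.map (Int.castRingHom K) (C D * (4 * cyclotomic l ℤ))
      = C (τ ^ 2) * (4 * (f * g)) := by
    rw [Polynomial.map_mul, Polynomial.map_mul, Polynomial.map_ofNat, map_C, map_cyclotomic,
      ← hfg, hDτ]
  have h2 : Polynomial.map (Int.castRingHom K) (C D * P ^ 2 - Q₁ ^ 2)
      = C (τ ^ 2) * (f + g) ^ 2 - ((f - g) * C τ) ^ 2 := by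
    rw [Polynomial.map_sub, Polynomial.map_mul, Polynomial.map_pow, Polynomial.map_pow,
      map_C, hP, hQ₁, hP₀eq, hQ₀eq, hDτ]
  have h3 : C (τ ^ 2) * (4 * (f * g)) = C (τ ^ 2) * (f + g) ^ 2 - ((f - g) * C τ) ^ 2 := by
    rw [C_pow]
    ring
  have hKid : Polynomial.map (Int.castRingHom K) (C D * (4 * cyclotomic l ℤ))
      = Polynomial.map (Int.castRingHom K) (C D * P ^ 2 - Q₁ ^ 2) :=
    h1.trans (h3.trans h2.symm)
  have hmapinj : Function.Injective
      (Polynomial.map (Int.castRingHom K) : ℤ[X] → K[X]) :=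
    Polynomial.map_injective _ Int.cast_injective
  have hZid : C D * (4 * cyclotomic l ℤ) = C D * P ^ 2 - Q₁ ^ 2 := hmapinj hKid
  -- divisibility by the prime l
  have hlprime : Prime (C (l : ℤ) : ℤ[X]) :=
    Polynomial.prime_C_iff.mpr (Nat.prime_iff_prime_int.mp hl)
  have hCD : (C D : ℤ[X]) = C ((-1) ^ ((l - 1) / 2)) * C (l : ℤ) := by
    rw [← map_mul, hD]
  have hdvd : (C (l : ℤ) : ℤ[X]) ∣ Q₁ := by
    have h1 : (C (l : ℤ) : ℤ[X]) ∣ Q₁ ^ 2 := by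
      have h6 : Q₁ ^ 2 = C D * (P ^ 2 - 4 * cyclotomic l ℤ) := by linear_combination hZid
      rw [h6, hCD]
      exact dvd_mul_of_dvd_left (dvd_mul_left _ _) _
    rcases (hlprime.dvd_of_dvd_pow (n := 2) h1) with h
    exact h
  have hdvdD : (C D : ℤ[X]) ∣ Q₁ := by
    rw [hCD]
    obtain ⟨Q, hQ⟩ := hdvd
    refine ⟨C ((-1) ^ ((l - 1) / 2)) * Q, ?_⟩
    rw [hQ]
    have hsq : (C ((-1) ^ ((l - 1) / 2) : ℤ) : ℤ[X]) * C ((-1) ^ ((l - 1) / 2) : ℤ) = 1 := by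
      rw [← map_mul, ← pow_add, ← two_mul, pow_mul]
      norm_num
    linear_combination (-(C (l : ℤ) * Q)) * hsq
  obtain ⟨Q, hQ⟩ := hdvdD
  refine ⟨P, Q, ?_⟩
  have hCD0 : (C D : ℤ[X]) ≠ 0 := by
    rw [Ne, Polynomial.C_eq_zero, hD]
    intro h
    have : (l : ℤ) ≠ 0 := Int.natCast_ne_zero.mpr hl.ne_zero
    rcases mul_eq_zero.mp h with h' | h'
    · exact pow_ne_zero _ (by norm_num) h'
    · exact this h'
  apply mul_left_cancel₀ hCD0
  rw [hZid, hQ]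
  ring
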